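/- Let f(x) = (x − α_1)^{e_1}(x − α_2)^{e_2} with α_1, α_2 ∈ ℤ_p and v_p(α_1 − α_2) = 0. Then for Re(s) > 0, Z(s,f) = p^{−1}(p − 2) + p^{−1−e_1 s}(1 − p^{−1})/(1 − p^{−1−e_1 s}) + p^{−1−e_2 s}(1 − p^{−1})/(1 − p^{−1−e_2 s}) provided e_1, e_2 ≥ 1 (interpreting each term via the geometric series formula). -/

import Mathlib

open MeasureTheory

noncomputable instance {p : ℕ} [Fact p.Prime] : MeasurableSpace ℤ_[p] := borel _
instance {p : ℕ} [Fact p.Prime] : BorelSpace ℤ_[p] := ⟨rfl⟩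

open scoped ENNReal

variable {p : ℕ} [Fact p.Prime]

lemma zr_ball_meas_set (a : ℤ_[p]) (n : ℕ) :
    MeasurableSet {x : ℤ_[p] | ‖x - a‖ ≤ (p : ℝ) ^ (-(n : ℤ))} :=
  (isClosed_le (by fun_prop) continuous_const).measurableSet

lemma zr_ball_meas (μ : Measure ℤ_[p]) [μ.IsAddHaarMeasure] (hμ : μ Set.univ = 1)
    (a : ℤ_[p]) (n : ℕ) :
    μ {x : ℤ_[p] | ‖x - a‖ ≤ (p : ℝ) ^ (-(n : ℤ))} = ((p : ℝ≥0∞) ^ n)⁻¹ := by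
  have key : ∀ b : ℤ_[p], μ {x : ℤ_[p] | ‖x - b‖ ≤ (p : ℝ) ^ (-(n : ℤ))}
      = μ {x : ℤ_[p] | ‖x - 0‖ ≤ (p : ℝ) ^ (-(n : ℤ))} := by
    intro b
    have : {x : ℤ_[p] | ‖x - b‖ ≤ (p : ℝ) ^ (-(n : ℤ))}
        = (fun x => -b + x) ⁻¹' {x : ℤ_[p] | ‖x - 0‖ ≤ (p : ℝ) ^ (-(n : ℤ))} := by
      ext x; simp [Set.mem_preimage, sub_eq_neg_add, add_comm]
    rw [this, measure_preimage_add]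
  -- covering
  have cover : (Set.univ : Set ℤ_[p]) =
      ⋃ k : Fin (p ^ n), {x : ℤ_[p] | ‖x - ((k : ℕ) : ℤ_[p])‖ ≤ (p : ℝ) ^ (-(n : ℤ))} := by
    ext x
    simp only [Set.mem_univ, Set.mem_iUnion, true_iff, Set.mem_setOf_eq]
    refine ⟨⟨x.appr n, x.appr_lt n⟩, ?_⟩
    exact (PadicInt.norm_le_pow_iff_mem_span_pow _ n).2 (x.appr_spec n)
  have disj : Pairwise (Function.onFun Disjoint
      (fun k : Fin (p ^ n) => {x : ℤ_[p] | ‖x - ((k : ℕ) : ℤ_[p])‖ ≤ (p : ℝ) ^ (-(n : ℤ))})) := by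
    intro j k hjk
    rw [Function.onFun, Set.disjoint_left]
    intro x hj hk
    apply hjk
    have hsum : ‖(((j : ℕ) : ℤ_[p]) - ((k : ℕ) : ℤ_[p]))‖ ≤ (p : ℝ) ^ (-(n : ℤ)) := by
      have : (((j : ℕ) : ℤ_[p]) - ((k : ℕ) : ℤ_[p])) = -(x - j) + (x - k) := by ring
      rw [this]
      exact le_trans (PadicInt.nonarchimedean _ _) (max_le (by rw [norm_neg]; exact hj) hk)
    have hdvd : ((p : ℤ) ^ n) ∣ ((j : ℕ) : ℤ) - ((k : ℕ) : ℤ) := by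
      have := (PadicInt.norm_int_le_pow_iff_dvd (k := ((j : ℕ) : ℤ) - ((k : ℕ) : ℤ)) (n := n)).1
        (by push_cast at hsum ⊢; exact hsum)
      exact_mod_cast this
    have : ((j : ℕ) : ℤ) - ((k : ℕ) : ℤ) = 0 := by
      refine Int.eq_zero_of_abs_lt_dvd hdvd ?_
      have hj' : ((j : ℕ) : ℤ) < (p : ℤ) ^ n := by exact_mod_cast j.2
      have hk' : ((k : ℕ) : ℤ) < (p : ℤ) ^ n := by exact_mod_cast k.2
      have hj0 : (0 : ℤ) ≤ ((j : ℕ) : ℤ) := Int.natCast_nonneg _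
      have hk0 : (0 : ℤ) ≤ ((k : ℕ) : ℤ) := Int.natCast_nonneg _
      rw [abs_lt]; omega
    have : (j : ℕ) = (k : ℕ) := by omega
    exact Fin.ext this
  have hsum : μ Set.univ = ∑' k : Fin (p ^ n),
      μ {x : ℤ_[p] | ‖x - ((k : ℕ) : ℤ_[p])‖ ≤ (p : ℝ) ^ (-(n : ℤ))} := by
    rw [cover]
    exact measure_iUnion disj fun k => zr_ball_meas_set _ n
  simp_rw [key] at hsum
  rw [hμ, tsum_fintype] at hsum
  simp only [Finset.sum_const, Finset.card_univ, Fintype.card_fin, nsmul_eq_mul] at hsum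
  have hp0 : ((p : ℝ≥0∞) ^ n) ≠ 0 := by
    have : (p : ℝ≥0∞) ≠ 0 := by exact_mod_cast (Fact.out : p.Prime).ne_zero
    positivity
  have hptop : ((p : ℝ≥0∞) ^ n) ≠ ⊤ := by
    exact ENNReal.pow_ne_top (ENNReal.natCast_ne_top p)
  rw [show ((p ^ n : ℕ) : ℝ≥0∞) = (p : ℝ≥0∞) ^ n by push_cast; ring] at hsum
  rw [key a, show μ {x : ℤ_[p] | ‖x - 0‖ ≤ (p : ℝ) ^ (-(n : ℤ))} = 1 / (p : ℝ≥0∞) ^ n from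
    (ENNReal.eq_div_iff hp0 hptop).2 hsum.symm, one_div]

lemma zr_sphere_meas_set (a : ℤ_[p]) (n : ℕ) :
    MeasurableSet {x : ℤ_[p] | ‖x - a‖ = (p : ℝ) ^ (-(n : ℤ))} :=
  (isClosed_eq (by fun_prop) continuous_const).measurableSet

lemma zr_sphere_eq_diff (a : ℤ_[p]) (n : ℕ) :
    {x : ℤ_[p] | ‖x - a‖ = (p : ℝ) ^ (-(n : ℤ))}
      = {x : ℤ_[p] | ‖x - a‖ ≤ (p : ℝ) ^ (-(n : ℤ))}
        \ {x : ℤ_[p] | ‖x - a‖ ≤ (p : ℝ) ^ (-((n + 1 : ℕ) : ℤ))} := by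
  have key : ∀ y : ℤ_[p], (‖y‖ ≤ (p : ℝ) ^ (-((n + 1 : ℕ) : ℤ)) ↔ ‖y‖ < (p : ℝ) ^ (-(n : ℤ))) := by
    intro y
    have := PadicInt.norm_le_pow_iff_norm_lt_pow_add_one y (-((n + 1 : ℕ) : ℤ))
    rwa [show (-((n + 1 : ℕ) : ℤ) + 1) = -(n : ℤ) by push_cast; ring] at this
  ext x
  simp only [Set.mem_setOf_eq, Set.mem_diff, key]
  constructor
  · intro h; exact ⟨le_of_eq h, by rw [h]; exact lt_irrefl _⟩
  · intro ⟨h1, h2⟩; exact le_antisymm h1 (not_lt.1 h2)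

lemma zr_sphere_meas (μ : Measure ℤ_[p]) [μ.IsAddHaarMeasure] (hμ : μ Set.univ = 1)
    (a : ℤ_[p]) (n : ℕ) :
    μ {x : ℤ_[p] | ‖x - a‖ = (p : ℝ) ^ (-(n : ℤ))}
      = ((p : ℝ≥0∞) ^ n)⁻¹ - ((p : ℝ≥0∞) ^ (n + 1))⁻¹ := by
  have hp1 : (1 : ℝ) < p := by exact_mod_cast (Fact.out : p.Prime).one_lt
  have hsub : {x : ℤ_[p] | ‖x - a‖ ≤ (p : ℝ) ^ (-((n + 1 : ℕ) : ℤ))}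
      ⊆ {x : ℤ_[p] | ‖x - a‖ ≤ (p : ℝ) ^ (-(n : ℤ))} := by
    intro x hx
    exact le_trans hx (zpow_le_zpow_right₀ hp1.le (by push_cast; omega))
  rw [zr_sphere_eq_diff, measure_diff hsub (zr_ball_meas_set a (n + 1)).nullMeasurableSet
      (by rw [zr_ball_meas μ hμ]; exact ENNReal.inv_ne_top.2 (pow_ne_zero _ (by exact_mod_cast (Fact.out : p.Prime).ne_zero))),
    zr_ball_meas μ hμ, zr_ball_meas μ hμ]

lemma zr_singleton_null (μ : Measure ℤ_[p]) [μ.IsAddHaarMeasure] (hμ : μ Set.univ = 1)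
    (a : ℤ_[p]) : μ {a} = 0 := by
  by_contra h
  obtain ⟨n, hn⟩ := ENNReal.exists_inv_nat_lt h
  have h1 : μ {a} ≤ ((p : ℝ≥0∞) ^ n)⁻¹ := by
    rw [← zr_ball_meas μ hμ a n]
    apply measure_mono
    intro x hx
    simp only [Set.mem_singleton_iff] at hx
    subst hx
    simp only [Set.mem_setOf_eq, sub_self, norm_zero]
    positivity
  have h2 : ((p : ℝ≥0∞) ^ n)⁻¹ ≤ ((n : ℝ≥0∞))⁻¹ := by
    apply ENNReal.inv_le_inv.2
    have : (n : ℕ) ≤ p ^ n := le_trans (Nat.lt_two_pow_self (n := n)).le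
      (Nat.pow_le_pow_left (Fact.out : p.Prime).two_le n)
    exact_mod_cast this
  exact absurd hn (not_lt.2 (le_trans h1 h2))

lemma zr_exp_facts (hp : p.Prime) :
    ∀ z : ℂ, (p : ℂ) ^ z = Complex.exp ((Real.log p : ℂ) * z) := by
  intro z
  have hp0 : (p : ℂ) ≠ 0 := by exact_mod_cast hp.ne_zero
  rw [Complex.cpow_def_of_ne_zero hp0]
  congr 1
  rw [show ((p : ℕ) : ℂ) = ((p : ℝ) : ℂ) by norm_cast, ← Complex.ofReal_log (by positivity)]

lemma zr_zpow_ofReal (hp : p.Prime) (m : ℤ) :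
    (((p : ℝ) ^ m : ℝ) : ℂ) = Complex.exp ((Real.log p : ℂ) * m) := by
  have : (((p : ℝ) ^ m : ℝ) : ℂ) = (p : ℂ) ^ (m : ℂ) := by
    rw [Complex.cpow_intCast]
    push_cast
    ring
  rw [this, zr_exp_facts hp]

lemma zr_zpow_cpow (hp : p.Prime) (m : ℤ) (s : ℂ) :
    ((((p : ℝ) ^ m : ℝ)) : ℂ) ^ s = Complex.exp ((Real.log p : ℂ) * m * s) := by
  have hppos : (0 : ℝ) < (p : ℝ) ^ m := by
    have : (0 : ℝ) < p := by exact_mod_cast hp.pos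
    positivity
  rw [Complex.cpow_def_of_ne_zero (by exact_mod_cast hppos.ne'),
    ← Complex.ofReal_log hppos.le, Real.log_zpow]
  congr 1
  push_cast
  ring

lemma zr_ball_integral (μ : Measure ℤ_[p]) [μ.IsAddHaarMeasure] (hμ : μ Set.univ = 1)
    (α : ℤ_[p]) (e : ℕ) (s : ℂ) (hs : 0 < s.re)
    (g : ℤ_[p] → ℂ) (hg : IntegrableOn g {x : ℤ_[p] | ‖x - α‖ ≤ (p : ℝ) ^ (-((1 : ℕ) : ℤ))} μ)
    (hgval : ∀ x : ℤ_[p], ‖x - α‖ ≤ (p : ℝ) ^ (-((1 : ℕ) : ℤ)) →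
      g x = ((‖x - α‖ ^ e : ℝ) : ℂ) ^ s) :
    ∫ x in {x : ℤ_[p] | ‖x - α‖ ≤ (p : ℝ) ^ (-((1 : ℕ) : ℤ))}, g x ∂μ
      = (p : ℂ) ^ (-1 - (e : ℂ) * s) * (1 - (p : ℂ)⁻¹)
          / (1 - (p : ℂ) ^ (-1 - (e : ℂ) * s)) := by
  have hp : p.Prime := Fact.out
  have hp1 : (1 : ℝ) < p := by exact_mod_cast hp.one_lt
  set L : ℂ := (Real.log p : ℂ) with hL
  set B : Set ℤ_[p] := {x : ℤ_[p] | ‖x - α‖ ≤ (p : ℝ) ^ (-((1 : ℕ) : ℤ))} with hB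
  set T : ℕ → Set ℤ_[p] :=
    fun n => {x : ℤ_[p] | ‖x - α‖ = (p : ℝ) ^ (-((n + 1 : ℕ) : ℤ))} with hT
  have hTB : ∀ n, T n ⊆ B := by
    intro n x hx
    simp only [hT, Set.mem_setOf_eq] at hx
    simp only [hB, Set.mem_setOf_eq, hx]
    exact zpow_le_zpow_right₀ hp1.le (by push_cast; omega)
  -- B is a.e. equal to the union of the spheres
  have hBae : B =ᵐ[μ] ⋃ n, T n := by
    rw [MeasureTheory.ae_eq_set]
    constructor
    · refine measure_mono_null ?_ (zr_singleton_null μ hμ α)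
      intro x ⟨hxB, hxT⟩
      simp only [Set.mem_iUnion, not_exists, hT, Set.mem_setOf_eq] at hxT
      simp only [Set.mem_singleton_iff]
      by_contra hxα
      have hy : x - α ≠ 0 := sub_ne_zero.2 hxα
      have hval : (1 : ℤ) ≤ (x - α).valuation := by
        have := (PadicInt.norm_le_pow_iff_le_valuation (x - α) hy 1).1
        simp only [Nat.cast_one] at this
        exact_mod_cast this hxB
      have hnorm : ‖x - α‖ = (p : ℝ) ^ (-((x - α).valuation : ℤ)) := PadicInt.norm_eq_zpow_neg_valuation hy
      apply hxT ((x - α).valuation - 1)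
      rw [hnorm]
      congr 1
      omega
    · have : (⋃ n, T n) \ B = ∅ := Set.diff_eq_empty.2 (Set.iUnion_subset hTB)
      rw [this]; exact measure_empty
  rw [setIntegral_congr_set hBae]
  have hdisj : Pairwise (Function.onFun Disjoint T) := by
    intro n m hnm
    rw [Function.onFun, Set.disjoint_left]
    intro x hn hm
    simp only [hT, Set.mem_setOf_eq] at hn hm
    apply hnm
    have := hn.symm.trans hm
    have := zpow_right_injective₀ (by linarith : (0:ℝ) < p) hp1.ne' this
    omega
  rw [integral_iUnion (fun n => zr_sphere_meas_set α (n + 1)) hdisj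
    (hg.mono_set (Set.iUnion_subset hTB))]
  -- compute each sphere integral
  have hμT : ∀ n : ℕ, (μ (T n)).toReal
      = (((p : ℝ) ^ (n + 1))⁻¹ - ((p : ℝ) ^ (n + 2))⁻¹) := by
    intro n
    have h0 : (p : ℝ≥0∞) ≠ 0 := by exact_mod_cast hp.ne_zero
    rw [hT]
    rw [zr_sphere_meas μ hμ α (n + 1),
      ENNReal.toReal_sub_of_le
        (ENNReal.inv_le_inv.2 (pow_le_pow_right₀ (by exact_mod_cast hp.one_lt.le) (by omega)))
        (ENNReal.inv_ne_top.2 (pow_ne_zero _ h0))]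
    simp [ENNReal.toReal_inv, ENNReal.toReal_pow]
  have hint : ∀ n : ℕ, ∫ x in T n, g x ∂μ
      = (((p : ℝ) ^ (n + 1))⁻¹ - ((p : ℝ) ^ (n + 2))⁻¹)
        • ((((p : ℝ) ^ (-(((n + 1) * e : ℕ) : ℤ)) : ℝ)) : ℂ) ^ s := by
    intro n
    rw [setIntegral_congr_fun (zr_sphere_meas_set α (n + 1))
      (g := fun _ => ((((p : ℝ) ^ (-(((n + 1) * e : ℕ) : ℤ)) : ℝ)) : ℂ) ^ s) ?_]
    · rw [setIntegral_const, measureReal_def, hμT n]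
    · intro x hx
      simp only [hT, Set.mem_setOf_eq] at hx
      rw [hgval x (hTB n hx)]
      have hxe : ‖x - α‖ ^ e = (p : ℝ) ^ (-(((n + 1) * e : ℕ) : ℤ)) := by
        rw [hx, ← zpow_natCast ((p : ℝ) ^ (-((n + 1 : ℕ) : ℤ))) e, ← zpow_mul,
          show (-((n + 1 : ℕ) : ℤ)) * (e : ℤ) = -(((n + 1) * e : ℕ) : ℤ) by push_cast; ring]
      rw [hxe]
  rw [tsum_congr hint]
  -- rewrite each summand in geometric form
  set r : ℂ := (p : ℂ) ^ (-1 - (e : ℂ) * s) with hr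
  have hrexp : r = Complex.exp (L * (-1 - (e : ℂ) * s)) := zr_exp_facts hp _
  have hinv : (p : ℂ)⁻¹ = Complex.exp (L * (-1)) := by
    rw [← zr_exp_facts hp (-1), Complex.cpow_neg_one]
  have hsummand : ∀ n : ℕ,
      (((p : ℝ) ^ (n + 1))⁻¹ - ((p : ℝ) ^ (n + 2))⁻¹)
        • ((((p : ℝ) ^ (-(((n + 1) * e : ℕ) : ℤ)) : ℝ)) : ℂ) ^ s
      = ((1 - (p : ℂ)⁻¹) * r) * r ^ n := by
    intro n
    have c1 : (((p : ℝ) ^ (n + 1))⁻¹ : ℝ) = (p : ℝ) ^ (-((n + 1 : ℕ) : ℤ)) := by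
      rw [zpow_neg, zpow_natCast]
    have c2 : (((p : ℝ) ^ (n + 2))⁻¹ : ℝ) = (p : ℝ) ^ (-((n + 2 : ℕ) : ℤ)) := by
      rw [zpow_neg, zpow_natCast]
    rw [Complex.real_smul, Complex.ofReal_sub, c1, c2,
      zr_zpow_ofReal hp, zr_zpow_ofReal hp, zr_zpow_cpow hp, hrexp, hinv,
      ← Complex.exp_nat_mul]
    simp only [sub_mul, one_mul, ← Complex.exp_add]
    congr 2 <;> (simp only [hL]; push_cast; try ring)
  calc ∑' n : ℕ, (((p : ℝ) ^ (n + 1))⁻¹ - ((p : ℝ) ^ (n + 2))⁻¹)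
        • ((((p : ℝ) ^ (-(((n + 1) * e : ℕ) : ℤ)) : ℝ)) : ℂ) ^ s
      = ∑' n : ℕ, ((1 - (p : ℂ)⁻¹) * r) * r ^ n := tsum_congr hsummand
    _ = ((1 - (p : ℂ)⁻¹) * r) * (1 - r)⁻¹ := by
        rw [tsum_mul_left, tsum_geometric_of_norm_lt_one ?_]
        rw [hrexp, Complex.norm_exp, hL, Complex.re_ofReal_mul]
        have hre : (-1 - (e : ℂ) * s).re = -1 - (e : ℝ) * s.re := by
          simp [Complex.sub_re, Complex.mul_re]
        rw [hre]
        have hlog : 0 < Real.log p := Real.log_pos hp1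
        have he0 : (0 : ℝ) ≤ (e : ℝ) * s.re := by positivity
        exact Real.exp_lt_one_iff.2 (mul_neg_of_pos_of_neg hlog (by linarith))
    _ = (p : ℂ) ^ (-1 - (e : ℂ) * s) * (1 - (p : ℂ)⁻¹)
          / (1 - (p : ℂ) ^ (-1 - (e : ℂ) * s)) := by
        rw [← hr, div_eq_mul_inv]; ring

/-- For `f(x) = (x - α₁)^{e₁} (x - α₂)^{e₂}` with `v_p(α₁ - α₂) = 0`,
`Z(s,f) = p⁻¹(p-2) + p^{-1-e₁s}(1-p⁻¹)/(1-p^{-1-e₁s}) + p^{-1-e₂s}(1-p⁻¹)/(1-p^{-1-e₂s})`. -/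
theorem zeta_two_roots (p : ℕ) [Fact p.Prime]
    (μ : Measure ℤ_[p]) [μ.IsAddHaarMeasure] (hμ : μ Set.univ = 1)
    (α₁ α₂ : ℤ_[p]) (hα : ‖α₁ - α₂‖ = 1)
    (e₁ e₂ : ℕ) (he₁ : 1 ≤ e₁) (he₂ : 1 ≤ e₂) (s : ℂ) (hs : 0 < s.re) :
    ∫ x : ℤ_[p], ((‖(x - α₁) ^ e₁ * (x - α₂) ^ e₂‖ : ℝ) : ℂ) ^ s ∂μ
      = (p : ℂ)⁻¹ * ((p : ℂ) - 2)
        + (p : ℂ) ^ (-1 - (e₁ : ℂ) * s) * (1 - (p : ℂ)⁻¹) / (1 - (p : ℂ) ^ (-1 - (e₁ : ℂ) * s))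
        + (p : ℂ) ^ (-1 - (e₂ : ℂ) * s) * (1 - (p : ℂ)⁻¹) / (1 - (p : ℂ) ^ (-1 - (e₂ : ℂ) * s)) := by
  have hp : p.Prime := Fact.out
  have hp1 : (1 : ℝ) < p := by exact_mod_cast hp.one_lt
  have hpC : (p : ℂ) ≠ 0 := by exact_mod_cast hp.ne_zero
  set g : ℤ_[p] → ℂ := fun x => ((‖(x - α₁) ^ e₁ * (x - α₂) ^ e₂‖ : ℝ) : ℂ) ^ s with hg
  have hcontN : Continuous fun x : ℤ_[p] => ‖(x - α₁) ^ e₁ * (x - α₂) ^ e₂‖ := by fun_prop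
  have hcont : Continuous g := (Complex.continuous_ofReal_cpow_const hs).comp hcontN
  have hInt : Integrable g μ :=
    hcont.integrable_of_hasCompactSupport (isClosed_tsupport _).isCompact
  -- the three pieces
  set B₁ : Set ℤ_[p] := {x : ℤ_[p] | ‖x - α₁‖ ≤ (p : ℝ) ^ (-((1 : ℕ) : ℤ))} with hB₁
  set B₂ : Set ℤ_[p] := {x : ℤ_[p] | ‖x - α₂‖ ≤ (p : ℝ) ^ (-((1 : ℕ) : ℤ))} with hB₂
  set U : Set ℤ_[p] := {x : ℤ_[p] | ‖x - α₁‖ = 1} ∩ {x : ℤ_[p] | ‖x - α₂‖ = 1} with hU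
  have hlt : ∀ y : ℤ_[p], ‖y‖ ≤ (p : ℝ) ^ (-((1 : ℕ) : ℤ)) ↔ ‖y‖ < 1 := by
    intro y
    have := PadicInt.norm_le_pow_iff_norm_lt_pow_add_one y (-((1 : ℕ) : ℤ))
    rwa [show (-((1 : ℕ) : ℤ) + 1) = 0 by omega, zpow_zero] at this
  have hmU : MeasurableSet U :=
    ((isClosed_eq (by fun_prop) continuous_const).inter
      (isClosed_eq (by fun_prop) continuous_const)).measurableSet
  have hdisj12 : Disjoint B₁ B₂ := by
    rw [Set.disjoint_left]
    intro x h1 h2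
    rw [hB₁, Set.mem_setOf_eq, hlt] at h1
    rw [hB₂, Set.mem_setOf_eq, hlt] at h2
    have : ‖α₁ - α₂‖ < 1 := by
      have : α₁ - α₂ = -(x - α₁) + (x - α₂) := by ring
      rw [this]
      exact lt_of_le_of_lt (PadicInt.nonarchimedean _ _)
        (max_lt (by rwa [norm_neg]) h2)
    rw [hα] at this; exact lt_irrefl _ this
  have hdisjU1 : Disjoint U B₁ := by
    rw [Set.disjoint_left]
    intro x h1 h2
    rw [hB₁, Set.mem_setOf_eq, hlt] at h2
    have h11 : ‖x - α₁‖ = 1 := h1.1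
    rw [h11] at h2; exact lt_irrefl _ h2
  have hdisjU2 : Disjoint U B₂ := by
    rw [Set.disjoint_left]
    intro x h1 h2
    rw [hB₂, Set.mem_setOf_eq, hlt] at h2
    have h12 : ‖x - α₂‖ = 1 := h1.2
    rw [h12] at h2; exact lt_irrefl _ h2
  have hcover : (Set.univ : Set ℤ_[p]) = (U ∪ B₁) ∪ B₂ := by
    ext x
    simp only [Set.mem_univ, true_iff, Set.mem_union, hU, hB₁, hB₂, Set.mem_inter_iff,
      Set.mem_setOf_eq, hlt]
    by_cases h1 : ‖x - α₁‖ < 1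
    · exact Or.inl (Or.inr h1)
    · by_cases h2 : ‖x - α₂‖ < 1
      · exact Or.inr h2
      · exact Or.inl (Or.inl ⟨le_antisymm (PadicInt.norm_le_one _) (not_lt.1 h1),
          le_antisymm (PadicInt.norm_le_one _) (not_lt.1 h2)⟩)
  have hsplit : ∫ x : ℤ_[p], g x ∂μ
      = (∫ x in U, g x ∂μ) + (∫ x in B₁, g x ∂μ) + (∫ x in B₂, g x ∂μ) := by
    rw [← setIntegral_univ (f := g) (μ := μ), hcover,
      setIntegral_union (Set.disjoint_union_left.2 ⟨hdisjU2, hdisj12⟩)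
        (zr_ball_meas_set α₂ 1) (hInt.integrableOn) (hInt.integrableOn),
      setIntegral_union hdisjU1 (zr_ball_meas_set α₁ 1)
        (hInt.integrableOn) (hInt.integrableOn)]
  -- measure of U
  have hmB1 : μ B₁ = ((p : ℝ≥0∞) ^ (1 : ℕ))⁻¹ := zr_ball_meas μ hμ α₁ 1
  have hmB2 : μ B₂ = ((p : ℝ≥0∞) ^ (1 : ℕ))⁻¹ := zr_ball_meas μ hμ α₂ 1
  have hBfin : ((p : ℝ≥0∞) ^ (1 : ℕ))⁻¹ ≠ ⊤ :=
    ENNReal.inv_ne_top.2 (pow_ne_zero _ (by exact_mod_cast hp.ne_zero))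
  have hfinU : μ U ≠ ⊤ :=
    ne_top_of_le_ne_top (by rw [hμ]; exact ENNReal.one_ne_top)
      (measure_mono (Set.subset_univ _))
  have hadd : μ U + μ B₁ + μ B₂ = 1 := by
    rw [← hμ, hcover, measure_union (Set.disjoint_union_left.2 ⟨hdisjU2, hdisj12⟩)
        (zr_ball_meas_set α₂ 1),
      measure_union hdisjU1 (zr_ball_meas_set α₁ 1)]
  have hUr : (μ U).toReal = 1 - 2 * (p : ℝ)⁻¹ := by
    rw [hmB1, hmB2] at hadd
    have := congrArg ENNReal.toReal hadd
    rw [ENNReal.toReal_add (ENNReal.add_ne_top.2 ⟨hfinU, hBfin⟩) hBfin,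
      ENNReal.toReal_add hfinU hBfin, ENNReal.toReal_one] at this
    simp only [ENNReal.toReal_inv, ENNReal.toReal_pow, ENNReal.toReal_natCast, pow_one] at this
    linarith
  -- integral over U
  have hintU : ∫ x in U, g x ∂μ = (p : ℂ)⁻¹ * ((p : ℂ) - 2) := by
    rw [setIntegral_congr_fun hmU (g := fun _ => (1 : ℂ)) ?_]
    · rw [setIntegral_const, measureReal_def, hUr]
      rw [Complex.real_smul]
      push_cast
      field_simp
      try ring
    · intro x hx
      rw [hU] at hx
      rw [hg]
      simp only
      have h11 : ‖x - α₁‖ = 1 := hx.1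
      have h12 : ‖x - α₂‖ = 1 := hx.2
      rw [norm_mul, norm_pow, norm_pow, h11, h12]
      simp [Complex.one_cpow]
  -- integral over B₁
  have hval1 : ∀ x : ℤ_[p], ‖x - α₁‖ ≤ (p : ℝ) ^ (-((1 : ℕ) : ℤ)) →
      g x = ((‖x - α₁‖ ^ e₁ : ℝ) : ℂ) ^ s := by
    intro x hx
    rw [hlt] at hx
    have h2 : ‖x - α₂‖ = 1 := by
      have heq : x - α₂ = (x - α₁) + (α₁ - α₂) := by ring
      rw [heq, PadicInt.norm_add_eq_max_of_ne (by rw [hα]; exact ne_of_lt hx), hα]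
      exact max_eq_right hx.le
    rw [hg]
    simp only
    rw [norm_mul, norm_pow, norm_pow, h2, one_pow, mul_one]
  have hval2 : ∀ x : ℤ_[p], ‖x - α₂‖ ≤ (p : ℝ) ^ (-((1 : ℕ) : ℤ)) →
      g x = ((‖x - α₂‖ ^ e₂ : ℝ) : ℂ) ^ s := by
    intro x hx
    rw [hlt] at hx
    have h1 : ‖x - α₁‖ = 1 := by
      have heq : x - α₁ = (x - α₂) + (α₂ - α₁) := by ring
      have hα' : ‖α₂ - α₁‖ = 1 := by rw [← norm_neg, neg_sub]; exact hα
      rw [heq, PadicInt.norm_add_eq_max_of_ne (by rw [hα']; exact ne_of_lt hx), hα']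
      exact max_eq_right hx.le
    rw [hg]
    simp only
    rw [norm_mul, norm_pow, norm_pow, h1, one_pow, one_mul]
  have hintB1 := zr_ball_integral μ hμ α₁ e₁ s hs g hInt.integrableOn hval1
  have hintB2 := zr_ball_integral μ hμ α₂ e₂ s hs g hInt.integrableOn hval2
  rw [show (∫ x : ℤ_[p], ((‖(x - α₁) ^ e₁ * (x - α₂) ^ e₂‖ : ℝ) : ℂ) ^ s ∂μ)
      = ∫ x : ℤ_[p], g x ∂μ from rfl, hsplit, hintU, hintB1, hintB2]
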